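/- Let V be a real inner product space with orthogonal almost complex structure J, and let R be an algebraic curvature tensor on V satisfying the constant-type-α identity: R(X,Y,X,Y) - R(X,Y,JX,JY) = α·(g(X,X)g(Y,Y) - g(X,Y)² - g(JX,Y)²) for all X, Y ∈ V. Let S ⊂ V be a proper J-invariant subspace such that R(X,ξ)W ∈ S for all X, W ∈ S and ξ ∈ S^⊥ (strong R-invariance in the relevant directions). If S ≠ 0 and S^⊥ ≠ 0, then α = 0. -/
import Mathlib


open scoped RealInnerProductSpace

/-- If an algebraic curvature tensor satisfies the constant-type-`α` identity
and admits a nonzero proper `J`-invariant subspace `S` with `R(X,ξ)W ∈ S`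
for all `X, W ∈ S` and `ξ ∈ S^⊥`, then `α = 0`. -/
theorem stmt6 {V : Type*} [NormedAddCommGroup V] [InnerProductSpace ℝ V]
    [FiniteDimensional ℝ V]
    (J : V →ₗ[ℝ] V) (hJ2 : ∀ X, J (J X) = -X)
    (hJg : ∀ X Y, ⟪J X, J Y⟫ = ⟪X, Y⟫)
    (R : V →ₗ[ℝ] V →ₗ[ℝ] V →ₗ[ℝ] V →ₗ[ℝ] ℝ)
    (hA1 : ∀ X Y Z W, R X Y Z W = - R Y X Z W)
    (hA2 : ∀ X Y Z W, R X Y Z W = - R X Y W Z)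
    (hP : ∀ X Y Z W, R X Y Z W = R Z W X Y)
    (hB : ∀ X Y Z W, R X Y Z W + R Y Z X W + R Z X Y W = 0)
    (Rop : V → V → V → V)
    (hRop : ∀ A B C D, ⟪Rop A B C, D⟫ = R A B C D)
    (α : ℝ)
    (hconst : ∀ X Y, R X Y X Y - R X Y (J X) (J Y)
        = α * (⟪X, X⟫ * ⟪Y, Y⟫ - ⟪X, Y⟫ ^ 2 - ⟪J X, Y⟫ ^ 2))
    (S : Submodule ℝ V) (hSJ : ∀ X ∈ S, J X ∈ S)
    (hStrong : ∀ X ∈ S, ∀ W ∈ S, ∀ ξ ∈ Sᗮ, Rop X ξ W ∈ S)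
    (hS0 : S ≠ ⊥) (hS1 : Sᗮ ≠ ⊥) :
    α = 0 := by
  -- pick nonzero X ∈ S and ξ ∈ Sᗮ
  obtain ⟨X, hXS, hX0⟩ := Submodule.exists_mem_ne_zero_of_ne_bot hS0
  obtain ⟨ξ, hξS, hξ0⟩ := Submodule.exists_mem_ne_zero_of_ne_bot hS1
  have hJX : J X ∈ S := hSJ X hXS
  -- Jξ ∈ Sᗮ
  have hJξ : J ξ ∈ Sᗮ := by
    intro u hu
    have h := hJg (J u) ξ
    rw [hJ2, inner_neg_left] at h
    have hz := hξS (J u) (hSJ u hu)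
    linarith
  have hXξ : ⟪X, ξ⟫ = 0 := hξS X hXS
  have hJXξ : ⟪J X, ξ⟫ = 0 := hξS (J X) hJX
  have h1 : R X ξ X ξ = 0 := by
    rw [← hRop, real_inner_comm]
    exact (Submodule.mem_orthogonal' _ _).mp hξS _ (hStrong X hXS X hXS ξ hξS)
  have h2 : R X ξ (J X) (J ξ) = 0 := by
    rw [← hRop, real_inner_comm]
    exact (Submodule.mem_orthogonal' _ _).mp hJξ _ (hStrong X hXS (J X) hJX ξ hξS)
  have key := hconst X ξ
  rw [h1, h2, hXξ, hJXξ] at key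
  simp only [sub_zero, ne_eq] at key
  have hX : ⟪X, X⟫ ≠ 0 := fun h => hX0 (inner_self_eq_zero.mp h)
  have hξ : ⟪ξ, ξ⟫ ≠ 0 := fun h => hξ0 (inner_self_eq_zero.mp h)
  have : α * (⟪X, X⟫ * ⟪ξ, ξ⟫) = 0 := by linarith [key, sq_nonneg (0:ℝ)]
  rcases mul_eq_zero.mp this with h | h
  · exact h
  · exact absurd h (mul_ne_zero hX hξ)
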